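/- arXiv:1002.2733 — 3 statements merged into one kernel-verified Lean document; each statement's English description precedes it below -/
import Mathlib

section
/- Let H be a separable complex Hilbert space, let {T(t)}_{t∈ℝ} be a weakly measurable family of densely defined closed linear operators in H, and let 𝒯 be the maximally defined operator in L²(ℝ; H). Define 𝒟 = {f ∈ L²(ℝ; H) : f(t) ∈ dom(T(t)) for a.e. t ∈ ℝ}. Then the closure of 𝒟 in L²(ℝ; H) equals the closure of dom(𝒯) in L²(ℝ; H). -/
open MeasureTheory

noncomputable section

variable {H : Type*} [NormedAddCommGroup H] [InnerProductSpace ℂ H]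

/-- A family of vectors `g : ℝ → H` is weakly (Lebesgue) measurable if `t ↦ ⟪h, g t⟫` is
Lebesgue measurable for every `h ∈ H`. -/
def WeakMeasVec (g : ℝ → H) : Prop :=
  ∀ h : H, AEMeasurable (fun t : ℝ => (inner ℂ h (g t) : ℂ)) volume

/-- A family of bounded operators `A : ℝ → B(H)` is weakly measurable. -/
def WeakMeasOp (A : ℝ → H →L[ℂ] H) : Prop :=
  ∀ h k : H, AEMeasurable (fun t : ℝ => (inner ℂ h (A t k) : ℂ)) volume

/-- A family of (in general unbounded) linear operators in `H` is weakly measurable if it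
maps weakly measurable families of vectors in the domains to weakly measurable families. -/
def WeakMeasFam (T : ℝ → (H →ₗ.[ℂ] H)) : Prop :=
  ∀ f : (t : ℝ) → (T t).domain,
    WeakMeasVec (fun t => (f t : H)) → WeakMeasVec (fun t => T t (f t))

/-- `P` is the characteristic matrix of `T`: the `2 × 2` block operator matrix of the
orthogonal projection of `H ⊕ H` onto the graph of `T`. -/
def IsCharMatrix (T : H →ₗ.[ℂ] H) (P : Fin 2 → Fin 2 → (H →L[ℂ] H)) : Prop :=
  (∀ x y : H, (P 0 0 x + P 0 1 y, P 1 0 x + P 1 1 y) ∈ T.graph) ∧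
  (∀ x y : H, ∀ u : T.domain,
    (inner ℂ (x - (P 0 0 x + P 0 1 y)) (u : H) : ℂ)
      + (inner ℂ (y - (P 1 0 x + P 1 1 y)) (T u) : ℂ) = 0)

/-- N-measurability of a family of densely defined closed operators: the entries of the
characteristic matrices form weakly measurable families of bounded operators. -/
def NMeas (T : ℝ → (H →ₗ.[ℂ] H)) : Prop :=
  ∃ P : ℝ → Fin 2 → Fin 2 → (H →L[ℂ] H),
    (∀ t, IsCharMatrix (T t) (P t)) ∧ ∀ j k : Fin 2, WeakMeasOp (fun t => P t j k)

/-- `R = (T - z I)⁻¹ ∈ B(H)`, i.e. `z` lies in the resolvent set of `T` with resolvent `R`. -/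
def IsResolvent (T : H →ₗ.[ℂ] H) (z : ℂ) (R : H →L[ℂ] H) : Prop :=
  (∀ x : H, ∃ hx : R x ∈ T.domain, T ⟨R x, hx⟩ - z • R x = x) ∧
  (∀ y : T.domain, R (T y - z • (y : H)) = (y : H))

/-- `B = (T⋆ T + I)⁻¹ ∈ B(H)`. -/
def IsInvTstarTAddI [CompleteSpace H] (T : H →ₗ.[ℂ] H) (B : H →L[ℂ] H) : Prop :=
  ∀ x : H, ∃ (h1 : B x ∈ T.domain) (h2 : T ⟨B x, h1⟩ ∈ T.adjoint.domain),
    T.adjoint ⟨T ⟨B x, h1⟩, h2⟩ + B x = x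

/-- `C = T B`. -/
def IsTComp (T : H →ₗ.[ℂ] H) (B C : H →L[ℂ] H) : Prop :=
  ∀ x : H, ∃ h1 : B x ∈ T.domain, T ⟨B x, h1⟩ = C x

/-- `D = (T T⋆ + I)⁻¹ ∈ B(H)`. -/
def IsInvTTstarAddI [CompleteSpace H] (T : H →ₗ.[ℂ] H) (D : H →L[ℂ] H) : Prop :=
  ∀ x : H, ∃ (h1 : D x ∈ T.adjoint.domain) (h2 : T.adjoint ⟨D x, h1⟩ ∈ T.domain),
    T ⟨T.adjoint ⟨D x, h1⟩, h2⟩ + D x = x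

/-- `T` is a symmetric operator. -/
def IsSymmPMap (T : H →ₗ.[ℂ] H) : Prop :=
  ∀ x y : T.domain, (inner ℂ (x : H) (T y) : ℂ) = inner ℂ (T x) (y : H)

/-- `T` is an unbounded operator. -/
def UnboundedPMap (T : H →ₗ.[ℂ] H) : Prop :=
  ¬ ∃ C : ℝ, ∀ x : T.domain, ‖T x‖ ≤ C * ‖(x : H)‖


open Filter TopologicalSpace
open scoped ENNReal NNReal

section Aux


variable {H : Type*} [NormedAddCommGroup H] [InnerProductSpace ℂ H]

lemma myOrthonormal.countable [SeparableSpace H] {w : Set H}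
    (hw : Orthonormal ℂ ((↑) : w → H)) : w.Countable := by
  obtain ⟨D, hDc, hDd⟩ := TopologicalSpace.exists_countable_dense H
  have h : ∀ x : w, ∃ d, d ∈ D ∧ dist (x : H) d < 1/2 := by
    intro x
    obtain ⟨d, hd1, hd2⟩ := hDd.exists_dist_lt (x : H) (by norm_num : (0:ℝ) < 1/2)
    exact ⟨d, hd1, hd2⟩
  choose d hdD hdist using h
  have hinj : Function.Injective d := by
    intro x y hxy
    by_contra hne
    have h1 : ‖(x : H)‖ = 1 := hw.1 x
    have h2 : ‖(y : H)‖ = 1 := hw.1 y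
    have h0 : (inner ℂ (x : H) (y : H) : ℂ) = 0 := hw.2 hne
    have hd2 : dist (x : H) (y : H) < 1 := by
      calc dist (x : H) (y : H) ≤ dist (x : H) (d x) + dist (d x) (y : H) := dist_triangle _ _ _
        _ = dist (x : H) (d x) + dist (y : H) (d y) := by rw [hxy, dist_comm (d y) (y : H)]
        _ < 1/2 + 1/2 := add_lt_add (hdist x) (hdist y)
        _ = 1 := by norm_num
    have hsq : ‖(x : H) - (y : H)‖ ^ 2 = 2 := by
      rw [@norm_sub_sq ℂ, h1, h2, h0]
      simp
      norm_num
    rw [dist_eq_norm] at hd2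
    nlinarith [norm_nonneg ((x : H) - (y : H))]
  haveI := hDc.to_subtype
  have : Countable ↥w :=
    Function.Injective.countable (f := fun x : w => (⟨d x, hdD x⟩ : D))
      (fun a b hab => hinj (congrArg Subtype.val hab))
  exact Set.countable_coe_iff.mpr this

lemma myPettis [CompleteSpace H] [SeparableSpace H] (g : ℝ → H)
    (hg : ∀ h : H, AEMeasurable (fun t : ℝ => (inner ℂ h (g t) : ℂ)) volume) :
    AEStronglyMeasurable g (volume : Measure ℝ) := by
  obtain ⟨w, b, hb⟩ := exists_hilbertBasis ℂ H
  have hw : Orthonormal ℂ ((↑) : w → H) := by rw [← hb]; exact b.orthonormal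
  haveI : Countable ↥w := (myOrthonormal.countable hw).to_subtype
  refine aestronglyMeasurable_of_tendsto_ae (atTop : Filter (Finset ↥w))
    (f := fun s t => ∑ i ∈ s, (inner ℂ (i : H) (g t) : ℂ) • (i : H)) ?_ ?_
  · intro s
    refine Finset.aestronglyMeasurable_fun_sum s fun i _ => ?_
    exact ((hg (i : H)).aestronglyMeasurable).smul_const (i : H)
  · refine Eventually.of_forall fun t => ?_
    have h1 := b.hasSum_repr (g t)
    have h2 : (fun i : w => b.repr (g t) i • b i) =
        fun i : w => (inner ℂ (i : H) (g t) : ℂ) • (i : H) := by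
      funext i
      rw [b.repr_apply_apply, hb]
    rw [h2] at h1
    exact h1

end Aux

/-- For a weakly measurable family of densely defined closed operators with
maximal operator `𝒯` in `L²(ℝ; H)`, the closure of
`𝒟 = {f ∈ L²(ℝ; H) : f t ∈ dom (T t) a.e.}` equals the closure of `dom 𝒯`. -/
theorem stmt_14 {H : Type*} [NormedAddCommGroup H] [InnerProductSpace ℂ H]
    [CompleteSpace H] [TopologicalSpace.SeparableSpace H]
    (T : ℝ → (H →ₗ.[ℂ] H))
    (hdense : ∀ t, Dense ((T t).domain : Set H)) (hclosed : ∀ t, (T t).IsClosed)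
    (hmeas : WeakMeasFam T)
    (𝒯 : Lp H 2 (volume : Measure ℝ) →ₗ.[ℂ] Lp H 2 (volume : Measure ℝ))
    (h𝒯 : ∀ f g : Lp H 2 (volume : Measure ℝ),
      ((f, g) ∈ 𝒯.graph ↔
        ∀ᵐ t ∂(volume : Measure ℝ),
          ∃ hft : f t ∈ (T t).domain, T t ⟨f t, hft⟩ = g t)) :
    closure {f : Lp H 2 (volume : Measure ℝ) |
        ∀ᵐ t ∂(volume : Measure ℝ), f t ∈ (T t).domain}
      = closure (𝒯.domain : Set (Lp H 2 (volume : Measure ℝ))) := by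
  classical
  have hsub1 : (𝒯.domain : Set (Lp H 2 (volume : Measure ℝ))) ⊆
      {f : Lp H 2 (volume : Measure ℝ) | ∀ᵐ t ∂(volume : Measure ℝ), f t ∈ (T t).domain} := by
    intro f hf
    have hg := (h𝒯 f (𝒯 ⟨f, hf⟩)).mp (𝒯.mem_graph ⟨f, hf⟩)
    filter_upwards [hg] with t ht
    obtain ⟨h, -⟩ := ht
    exact h
  have hsub2 : {f : Lp H 2 (volume : Measure ℝ) |
        ∀ᵐ t ∂(volume : Measure ℝ), f t ∈ (T t).domain}
      ⊆ closure (𝒯.domain : Set (Lp H 2 (volume : Measure ℝ))) := by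
    intro f hf
    simp only [Set.mem_setOf_eq] at hf
    set F : (t : ℝ) → (T t).domain := fun t =>
      if h : f t ∈ (T t).domain then ⟨f t, h⟩ else 0 with hF
    have hFcoe : ∀ᵐ t ∂(volume : Measure ℝ), ((F t : H)) = f t := by
      filter_upwards [hf] with t ht
      simp only [hF, dif_pos ht]
    have hFweak : WeakMeasVec (fun t => (F t : H)) := by
      intro h
      have h1 : AEStronglyMeasurable (fun t : ℝ => (inner ℂ h (f t) : ℂ)) volume :=
        AEStronglyMeasurable.inner aestronglyMeasurable_const (Lp.aestronglyMeasurable f)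
      refine h1.aemeasurable.congr ?_
      filter_upwards [hFcoe] with t ht
      rw [ht]
    have hTF : WeakMeasVec (fun t => T t (F t)) := hmeas F hFweak
    have hg₀ : AEStronglyMeasurable (fun t => T t (F t)) (volume : Measure ℝ) :=
      myPettis _ hTF
    set g := hg₀.mk _ with hgdef
    have hgsm : StronglyMeasurable g := hg₀.stronglyMeasurable_mk
    have hgeq : (fun t => T t (F t)) =ᵐ[(volume : Measure ℝ)] g := hg₀.ae_eq_mk
    borelize H
    have hgnorm : Measurable fun t => ‖g t‖ := hgsm.measurable.norm
    set s : ℕ → Set ℝ := fun n => Set.Icc (-(n : ℝ)) n ∩ {t | ‖g t‖ ≤ n} with hs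
    have hsm : ∀ n, MeasurableSet (s n) := fun n =>
      measurableSet_Icc.inter (measurableSet_le hgnorm measurable_const)
    set fn : ℕ → ℝ → H := fun n => (s n).indicator f with hfn
    have hfnmem : ∀ n, MemLp (fn n) 2 (volume : Measure ℝ) := fun n =>
      (Lp.memLp f).indicator (hsm n)
    set gn : ℕ → ℝ → H := fun n => (s n).indicator g with hgns
    have hgnmem : ∀ n, MemLp (gn n) 2 (volume : Measure ℝ) := by
      intro n
      refine MemLp.of_le
        (memLp_indicator_const 2 (measurableSet_Icc : MeasurableSet (Set.Icc (-(n:ℝ)) n))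
          ((n : ℝ)) (Or.inr measure_Icc_lt_top.ne))
        (hgsm.aestronglyMeasurable.indicator (hsm n)) ?_
      refine Filter.Eventually.of_forall fun t => ?_
      by_cases ht : t ∈ s n
      · rw [hgns]
        simp only [Set.indicator_of_mem ht, Set.indicator_of_mem ht.1]
        rw [Real.norm_eq_abs, abs_of_nonneg (Nat.cast_nonneg n)]
        exact ht.2
      · rw [hgns]
        simp only [Set.indicator_of_notMem ht, norm_zero]
        positivity
    have key : ∀ n, ∀ᵐ t ∂(volume : Measure ℝ),
        ∃ h : fn n t ∈ (T t).domain, T t ⟨fn n t, h⟩ = gn n t := by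
      intro n
      filter_upwards [hf, hgeq] with t ht hgt
      by_cases hts : t ∈ s n
      · have hval : fn n t = f t := Set.indicator_of_mem hts f
        have hdom : fn n t ∈ (T t).domain := hval ▸ ht
        refine ⟨hdom, ?_⟩
        have hFt : F t = ⟨fn n t, hdom⟩ := by
          simp only [hF, dif_pos ht]
          exact Subtype.ext hval.symm
        rw [← hFt]
        simp only [hgns]
        rw [Set.indicator_of_mem hts]
        exact hgt
      · have hval : fn n t = 0 := Set.indicator_of_notMem hts f
        have hdom : fn n t ∈ (T t).domain := hval ▸ (T t).domain.zero_mem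
        refine ⟨hdom, ?_⟩
        have hzero : (⟨fn n t, hdom⟩ : (T t).domain) = 0 := Subtype.ext (by simp [hval])
        rw [hzero]
        simp only [hgns]
        rw [Set.indicator_of_notMem hts]
        exact (T t).toFun.map_zero
    set fN : ℕ → Lp H 2 (volume : Measure ℝ) := fun n => (hfnmem n).toLp (fn n) with hfN
    have hmemdom : ∀ n, fN n ∈ 𝒯.domain := by
      intro n
      have hgraph : (fN n, (hgnmem n).toLp (gn n)) ∈ 𝒯.graph := by
        rw [h𝒯]
        filter_upwards [key n, (hfnmem n).coeFn_toLp, (hgnmem n).coeFn_toLp] with t ht h1 h2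
        rw [h1, h2]
        exact ht
      obtain ⟨y, hy1, -⟩ := (LinearPMap.mem_graph_iff 𝒯).mp hgraph
      have : (y : Lp H 2 (volume : Measure ℝ)) = fN n := hy1
      exact this ▸ y.2
    have htendsto : Filter.Tendsto fN atTop (nhds f) := by
      rw [Lp.tendsto_Lp_iff_tendsto_eLpNorm']
      have hcongr : ∀ n, eLpNorm (⇑(fN n) - ⇑f) 2 (volume : Measure ℝ)
          = eLpNorm (fun t => fn n t - f t) 2 (volume : Measure ℝ) := by
        intro n
        refine eLpNorm_congr_ae ?_
        filter_upwards [(hfnmem n).coeFn_toLp] with t ht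
        simp [hfN, ht]
      have h2 : ∀ n, eLpNorm (fun t => fn n t - f t) 2 (volume : Measure ℝ)
          = (∫⁻ t, (‖fn n t - f t‖₊ : ℝ≥0∞) ^ ((2:ℝ≥0∞).toReal) ∂(volume : Measure ℝ))
              ^ (1 / (2:ℝ≥0∞).toReal) := fun n =>
        eLpNorm_eq_lintegral_rpow_enorm_toReal (by norm_num) ENNReal.ofNat_ne_top
      have hfin : (∫⁻ t, (‖f t‖₊ : ℝ≥0∞) ^ ((2:ℝ≥0∞).toReal) ∂(volume : Measure ℝ)) ≠ ∞ :=
        (lintegral_rpow_enorm_lt_top_of_eLpNorm_lt_top (by norm_num) ENNReal.ofNat_ne_top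
          (Lp.eLpNorm_lt_top f)).ne
      have hmeasn : ∀ n, AEMeasurable
          (fun t => (‖fn n t - f t‖₊ : ℝ≥0∞) ^ ((2:ℝ≥0∞).toReal)) (volume : Measure ℝ) := by
        intro n
        have hsub : AEStronglyMeasurable (fun t => fn n t - f t) (volume : Measure ℝ) :=
          (hfnmem n).aestronglyMeasurable.sub (Lp.aestronglyMeasurable f)
        exact ENNReal.continuous_rpow_const.measurable.comp_aemeasurable hsub.enorm
      have hbound : ∀ n, (fun t => (‖fn n t - f t‖₊ : ℝ≥0∞) ^ ((2:ℝ≥0∞).toReal))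
          ≤ᵐ[(volume : Measure ℝ)] fun t => (‖f t‖₊ : ℝ≥0∞) ^ ((2:ℝ≥0∞).toReal) := by
        intro n
        refine Filter.Eventually.of_forall fun t => ?_
        refine ENNReal.rpow_le_rpow ?_ ENNReal.toReal_nonneg
        rw [ENNReal.coe_le_coe, ← norm_toNNReal, ← norm_toNNReal]
        refine Real.toNNReal_mono ?_
        by_cases hts : t ∈ s n
        · simp [hfn, Set.indicator_of_mem hts]
        · simp [hfn, Set.indicator_of_notMem hts]
      have hlim : ∀ᵐ t ∂(volume : Measure ℝ),
          Filter.Tendsto (fun n => (‖fn n t - f t‖₊ : ℝ≥0∞) ^ ((2:ℝ≥0∞).toReal)) atTop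
            (nhds 0) := by
        refine Filter.Eventually.of_forall fun t => ?_
        have hev : ∀ᶠ n in atTop,
            (‖fn n t - f t‖₊ : ℝ≥0∞) ^ ((2:ℝ≥0∞).toReal) = 0 := by
          obtain ⟨N₁, hN₁⟩ := exists_nat_ge |t|
          obtain ⟨N₂, hN₂⟩ := exists_nat_ge ‖g t‖
          filter_upwards [Filter.eventually_ge_atTop (max N₁ N₂)] with n hn
          have hts : t ∈ s n := by
            constructor
            · rw [Set.mem_Icc, ← abs_le]
              calc |t| ≤ (N₁ : ℝ) := hN₁
                _ ≤ (n : ℝ) := by exact_mod_cast (le_max_left N₁ N₂).trans hn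
            · calc ‖g t‖ ≤ (N₂ : ℝ) := hN₂
                _ ≤ (n : ℝ) := by exact_mod_cast (le_max_right N₁ N₂).trans hn
          have hval : fn n t = f t := Set.indicator_of_mem hts f
          rw [hval]
          simp only [sub_self, nnnorm_zero, ENNReal.coe_zero]
          exact ENNReal.zero_rpow_of_pos (by norm_num)
        refine Filter.Tendsto.congr' ?_ tendsto_const_nhds
        filter_upwards [hev] with n hn
        exact hn.symm
      have hInt : Filter.Tendsto
          (fun n => ∫⁻ t, (‖fn n t - f t‖₊ : ℝ≥0∞) ^ ((2:ℝ≥0∞).toReal) ∂(volume : Measure ℝ))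
          atTop (nhds 0) := by
        have := MeasureTheory.tendsto_lintegral_of_dominated_convergence' _ hmeasn hbound hfin hlim
        simpa using this
      have hc := ((ENNReal.continuous_rpow_const (y := 1 / (2:ℝ≥0∞).toReal)).tendsto 0).comp hInt
      rw [ENNReal.zero_rpow_of_pos (by norm_num)] at hc
      refine Filter.Tendsto.congr ?_ hc
      intro n
      rw [Function.comp_apply, ← h2, ← hcongr]
    exact mem_closure_of_tendsto htendsto (Filter.Eventually.of_forall hmemdom)
  exact Set.Subset.antisymm (closure_minimal hsub2 isClosed_closure) (closure_mono hsub1)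

end
end

section
/- Let H be a separable complex Hilbert space, let {T(t)}_{t∈ℝ} be a weakly measurable family of densely defined closed linear operators in H, and let 𝒯 be the maximally defined operator in L²(ℝ; H). If the linear subspace 𝒟 = {f ∈ L²(ℝ; H) : f(t) ∈ dom(T(t)) for a.e. t ∈ ℝ} is dense in L²(ℝ; H), then 𝒯 is densely defined in L²(ℝ; H). -/
open MeasureTheory

noncomputable section

variable {H : Type*} [NormedAddCommGroup H] [InnerProductSpace ℂ H]

theorem exists_dom_congr {H : Type*} [NormedAddCommGroup H] [InnerProductSpace ℂ H]
    (T : H →ₗ.[ℂ] H) {x x' y y' : H} (hx : x = x') (hy : y = y')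
    (h : ∃ hx0 : x ∈ T.domain, T ⟨x, hx0⟩ = y) :
    ∃ hx0 : x' ∈ T.domain, T ⟨x', hx0⟩ = y' := by
  subst hx; subst hy; exact h

open Metric in
theorem pettis_aux {H : Type*} [NormedAddCommGroup H] [InnerProductSpace ℂ H]
    [TopologicalSpace.SeparableSpace H]
    {g : ℝ → H} (hg : ∀ h : H, AEMeasurable (fun t : ℝ => (inner ℂ h (g t) : ℂ)) volume) :
    AEStronglyMeasurable g (volume : Measure ℝ) := by
  classical
  letI : MeasurableSpace H := borel H
  haveI : BorelSpace H := ⟨rfl⟩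
  haveI : Nonempty H := ⟨0⟩
  haveI : SecondCountableTopology H := UniformSpace.secondCountable_of_separable H
  set d : ℕ → H := TopologicalSpace.denseSeq H with hd
  have hdr : DenseRange d := TopologicalSpace.denseRange_denseSeq H
  have hae : ∀ᵐ t ∂(volume : Measure ℝ), ∀ k : ℕ,
      (hg (d k)).mk _ t = (inner ℂ (d k) (g t) : ℂ) :=
    MeasureTheory.ae_all_iff.mpr fun k => ((hg (d k)).ae_eq_mk).symm
  rw [MeasureTheory.ae_iff] at hae
  obtain ⟨N, hNsub, hNmeas, hNnull⟩ := exists_measurable_superset_of_null hae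
  set g' : ℝ → H := fun t => if t ∈ N then 0 else g t with hg'
  have hgg' : g' =ᵐ[volume] g := by
    have : ∀ᵐ t ∂(volume : Measure ℝ), t ∉ N := by
      rw [MeasureTheory.ae_iff]; simpa using hNnull
    filter_upwards [this] with t ht
    simp only [hg', if_neg ht]
  set G : ℕ → ℝ → ℂ := fun k t => if t ∈ N then 0 else (hg (d k)).mk _ t with hG
  have hGmeas : ∀ k, Measurable (G k) :=
    fun k => Measurable.ite hNmeas measurable_const (hg (d k)).measurable_mk
  have hGval : ∀ k t, G k t = (inner ℂ (d k) (g' t) : ℂ) := by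
    intro k t
    by_cases ht : t ∈ N
    · simp only [hG, hg', if_pos ht, inner_zero_right]
    · have ht' : t ∉ {a | ¬∀ k : ℕ, (hg (d k)).mk _ a = (inner ℂ (d k) (g a) : ℂ)} :=
        fun h => ht (hNsub h)
      simp only [Set.mem_setOf_eq, not_not] at ht'
      simp only [hG, hg', if_neg ht, ht' k]
  -- preimages of closed balls are measurable
  have hcb : ∀ (c : H) (r : ℝ), 0 < r → MeasurableSet (g' ⁻¹' closedBall c r) := by
    intro c r hr
    have heq : g' ⁻¹' closedBall c r =
        ⋂ k : ℕ, {t : ℝ | ‖G k t - (inner ℂ (d k) c : ℂ)‖ ≤ r * ‖d k‖} := by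
      ext t
      simp only [Set.mem_preimage, Metric.mem_closedBall, dist_eq_norm, Set.mem_iInter,
        Set.mem_setOf_eq]
      have hinner : ∀ k, G k t - (inner ℂ (d k) c : ℂ) = (inner ℂ (d k) (g' t - c) : ℂ) := by
        intro k; rw [hGval k t, inner_sub_right]
      constructor
      · intro h k
        rw [hinner k]
        calc ‖(inner ℂ (d k) (g' t - c) : ℂ)‖ ≤ ‖d k‖ * ‖g' t - c‖ := norm_inner_le_norm _ _
          _ ≤ ‖d k‖ * r := mul_le_mul_of_nonneg_left h (norm_nonneg _)
          _ = r * ‖d k‖ := mul_comm _ _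
      · intro h
        set z := g' t - c with hz
        rcases eq_or_ne z 0 with hz0 | hz0
        · rw [hz0, norm_zero]; exact hr.le
        · obtain ⟨u, hu_mem, hu_lim⟩ := mem_closure_iff_seq_limit.mp (hdr z)
          have key : ∀ n, ‖(inner ℂ (u n) z : ℂ)‖ ≤ r * ‖u n‖ := by
            intro n
            obtain ⟨k, hk⟩ := hu_mem n
            have h2 := h k
            rw [hinner k] at h2
            rw [hk] at h2
            exact h2
          have h1 : Filter.Tendsto (fun n => ‖(inner ℂ (u n) z : ℂ)‖) Filter.atTop
              (nhds ‖(inner ℂ z z : ℂ)‖) :=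
            (hu_lim.inner tendsto_const_nhds).norm
          have h2 : Filter.Tendsto (fun n => r * ‖u n‖) Filter.atTop (nhds (r * ‖z‖)) :=
            tendsto_const_nhds.mul hu_lim.norm
          have hle : ‖(inner ℂ z z : ℂ)‖ ≤ r * ‖z‖ :=
            le_of_tendsto_of_tendsto' h1 h2 key
          have hzz : ‖(inner ℂ z z : ℂ)‖ = ‖z‖ * ‖z‖ := by
            rw [@inner_self_eq_norm_sq_to_K ℂ, norm_pow, RCLike.norm_ofReal, abs_norm, sq]
          rw [hzz] at hle
          exact le_of_mul_le_mul_right (by linarith [hle]) (norm_pos_iff.mpr hz0)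
    rw [heq]
    exact MeasurableSet.iInter fun k =>
      measurableSet_le (((hGmeas k).sub measurable_const).norm) measurable_const
  -- topological basis of balls centered at the dense sequence
  have hbasis : TopologicalSpace.IsTopologicalBasis
      {u : Set H | ∃ (j : ℕ) (q : ℚ), 0 < q ∧ u = ball (d j) q} := by
    apply TopologicalSpace.isTopologicalBasis_of_isOpen_of_nhds
    · rintro u ⟨j, q, _, rfl⟩; exact isOpen_ball
    · intro a u ha hu
      obtain ⟨ε, hε, hball⟩ := Metric.isOpen_iff.mp hu a ha
      obtain ⟨y, hy⟩ := Metric.denseRange_iff.mp hdr a (ε / 4) (by linarith)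
      obtain ⟨q, hq1, hq2⟩ := exists_rat_btwn (show ε / 4 < ε / 2 by linarith)
      refine ⟨ball (d y) q, ⟨y, q, ?_, rfl⟩, ?_, ?_⟩
      · have : (0:ℝ) < q := lt_trans (by linarith) hq1
        exact_mod_cast this
      · rw [mem_ball]; exact lt_trans hy hq1
      · intro x hx
        apply hball
        rw [mem_ball] at hx ⊢
        calc dist x a ≤ dist x (d y) + dist (d y) a := dist_triangle _ _ _
          _ < q + ε / 4 := add_lt_add hx (by rw [dist_comm] at hy; exact hy)
          _ < ε / 2 + ε / 4 := by gcongr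
          _ < ε := by linarith
  have hmg' : Measurable g' := by
    have hgen : (borel H : MeasurableSpace H) =
        MeasurableSpace.generateFrom {u : Set H | ∃ (j : ℕ) (q : ℚ), 0 < q ∧ u = ball (d j) q} :=
      hbasis.borel_eq_generateFrom
    have : @Measurable ℝ H _ (MeasurableSpace.generateFrom
        {u : Set H | ∃ (j : ℕ) (q : ℚ), 0 < q ∧ u = ball (d j) q}) g' := by
      apply measurable_generateFrom
      rintro u ⟨j, q, hq, rfl⟩
      have : ball (d j) q = ⋃ (q' : ℚ) (_ : 0 < q' ∧ (q' : ℝ) < q), closedBall (d j) q' := by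
        ext x
        simp only [mem_ball, Set.mem_iUnion, mem_closedBall]
        constructor
        · intro hx
          obtain ⟨q', h1, h2⟩ := exists_rat_btwn hx
          exact ⟨q', ⟨by exact_mod_cast lt_of_le_of_lt dist_nonneg h1, h2⟩, h1.le⟩
        · rintro ⟨q', ⟨_, h2⟩, h3⟩; exact lt_of_le_of_lt h3 h2
      rw [this, Set.preimage_iUnion]
      refine MeasurableSet.iUnion fun q' => ?_
      rw [Set.preimage_iUnion]
      exact MeasurableSet.iUnion fun hq' => hcb (d j) q' (by exact_mod_cast hq'.1)
    show @Measurable ℝ H _ (borel H) g'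
    rw [hgen]
    exact this
  exact (hmg'.stronglyMeasurable.aestronglyMeasurable).congr hgg'

/-- For a weakly measurable family of densely defined closed operators with
maximal operator `𝒯` in `L²(ℝ; H)`: if `𝒟 = {f ∈ L²(ℝ; H) : f t ∈ dom (T t) a.e.}` is dense,
then `𝒯` is densely defined. -/
theorem stmt_15 {H : Type*} [NormedAddCommGroup H] [InnerProductSpace ℂ H]
    [CompleteSpace H] [TopologicalSpace.SeparableSpace H]
    (T : ℝ → (H →ₗ.[ℂ] H))
    (hdense : ∀ t, Dense ((T t).domain : Set H)) (hclosed : ∀ t, (T t).IsClosed)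
    (hmeas : WeakMeasFam T)
    (𝒯 : Lp H 2 (volume : Measure ℝ) →ₗ.[ℂ] Lp H 2 (volume : Measure ℝ))
    (h𝒯 : ∀ f g : Lp H 2 (volume : Measure ℝ),
      ((f, g) ∈ 𝒯.graph ↔
        ∀ᵐ t ∂(volume : Measure ℝ),
          ∃ hft : f t ∈ (T t).domain, T t ⟨f t, hft⟩ = g t))
    (hD : Dense {f : Lp H 2 (volume : Measure ℝ) |
        ∀ᵐ t ∂(volume : Measure ℝ), f t ∈ (T t).domain}) :
    Dense (𝒯.domain : Set (Lp H 2 (volume : Measure ℝ))) := by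
    classical
  letI : MeasurableSpace H := borel H
  haveI : BorelSpace H := ⟨rfl⟩
  have key : {f : Lp H 2 (volume : Measure ℝ) |
      ∀ᵐ t ∂(volume : Measure ℝ), f t ∈ (T t).domain}
      ⊆ closure (𝒯.domain : Set (Lp H 2 (volume : Measure ℝ))) := by
    intro f hf
    simp only [Set.mem_setOf_eq] at hf
    set fd : (t : ℝ) → (T t).domain :=
      fun t => if h : f t ∈ (T t).domain then ⟨f t, h⟩ else 0 with hfd
    have hfdvec : WeakMeasVec (fun t => (fd t : H)) := by
      intro h
      have h1 : AEMeasurable (fun t : ℝ => (inner ℂ h (f t) : ℂ)) volume :=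
        ((aestronglyMeasurable_const (b := h)).inner (Lp.aestronglyMeasurable f)).aemeasurable
      apply h1.congr
      filter_upwards [hf] with t ht
      simp only [hfd, dif_pos ht]
    set φ : ℝ → H := fun t => T t (fd t) with hφ
    have hφw : WeakMeasVec φ := hmeas fd hfdvec
    have hφm : AEStronglyMeasurable φ (volume : Measure ℝ) := pettis_aux hφw
    obtain ⟨ψ, hψsm, hψeq⟩ := hφm
    set S : ℕ → Set ℝ := fun n => {t | ‖ψ t‖ ≤ n} ∩ {t | |t| ≤ n} with hS
    have hSmeas : ∀ n, MeasurableSet (S n) := fun n =>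
      (measurableSet_le hψsm.norm.measurable measurable_const).inter
        (measurableSet_le measurable_id.abs measurable_const)
    have hfn : ∀ n : ℕ, MemLp (Set.indicator (S n) ⇑f) 2 (volume : Measure ℝ) :=
      fun n => (Lp.memLp f).indicator (hSmeas n)
    have hgn : ∀ n : ℕ, MemLp (Set.indicator (S n) ψ) 2 (volume : Measure ℝ) := by
      intro n
      rw [memLp_indicator_iff_restrict (hSmeas n)]
      haveI : IsFiniteMeasure ((volume : Measure ℝ).restrict (S n)) := by
        constructor
        rw [Measure.restrict_apply_univ]
        have hsub : S n ⊆ Set.Icc (-(n : ℝ)) n := fun t ht => abs_le.mp ht.2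
        exact lt_of_le_of_lt (measure_mono hsub)
          (by rw [Real.volume_Icc]; exact ENNReal.ofReal_lt_top)
      exact MemLp.of_bound (hψsm.aestronglyMeasurable.restrict) n
        ((ae_restrict_iff' (hSmeas n)).mpr (Filter.Eventually.of_forall fun t ht => ht.1))
    set fnL : ℕ → Lp H 2 (volume : Measure ℝ) := fun n => (hfn n).toLp _ with hfnL
    set gnL : ℕ → Lp H 2 (volume : Measure ℝ) := fun n => (hgn n).toLp _ with hgnL
    have hmem : ∀ n, fnL n ∈ 𝒯.domain := by
      intro n
      have hgraph : (fnL n, gnL n) ∈ 𝒯.graph := by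
        rw [h𝒯]
        filter_upwards [hf, hψeq, (hfn n).coeFn_toLp, (hgn n).coeFn_toLp] with t hft hψt hf1 hg1
        by_cases ht : t ∈ S n
        · refine exists_dom_congr (T t)
            ((hf1.trans (Set.indicator_of_mem ht _)).symm)
            ((hg1.trans (Set.indicator_of_mem ht _)).symm) ⟨hft, ?_⟩
          have hfdt : fd t = ⟨f t, hft⟩ := by simp only [hfd, dif_pos hft]
          calc T t ⟨f t, hft⟩ = T t (fd t) := by rw [hfdt]
            _ = ψ t := hψt
        · refine exists_dom_congr (T t)
            ((hf1.trans (Set.indicator_of_notMem ht _)).symm)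
            ((hg1.trans (Set.indicator_of_notMem ht _)).symm)
            ⟨Submodule.zero_mem _, ?_⟩
          exact (T t).map_zero
      obtain ⟨y, hy1, -⟩ := (𝒯.mem_graph_iff).mp hgraph
      have hy1' : (y : Lp H 2 (volume : Measure ℝ)) = fnL n := hy1
      rw [← hy1']
      exact y.2
    rw [mem_closure_iff_seq_limit]
    refine ⟨fnL, hmem, ?_⟩
    rw [Lp.tendsto_Lp_iff_tendsto_eLpNorm']
    have hcongr : ∀ n, eLpNorm (⇑(fnL n) - ⇑f) 2 (volume : Measure ℝ)
        = eLpNorm (Set.indicator (S n)ᶜ ⇑f) 2 (volume : Measure ℝ) := by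
      intro n
      rw [← eLpNorm_neg (Set.indicator (S n)ᶜ ⇑f) 2 (volume : Measure ℝ)]
      apply eLpNorm_congr_ae
      filter_upwards [(hfn n).coeFn_toLp] with t ht
      simp only [Pi.sub_apply, Pi.neg_apply, hfnL, ht]
      by_cases hts : t ∈ S n
      · rw [Set.indicator_of_mem hts, Set.indicator_of_notMem (by simpa using hts)]
        simp
      · rw [Set.indicator_of_notMem hts, Set.indicator_of_mem (by simpa using hts)]
        simp
    simp only [hcongr]
    -- dominated convergence for the lintegrals
    have hmble : Measurable fun t => ((‖f t‖₊ : ENNReal)) ^ (2 : ℝ) :=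
      ((Lp.stronglyMeasurable f).measurable.nnnorm.coe_nnreal_ennreal).pow_const _
    have hfin : (∫⁻ t, ((‖f t‖₊ : ENNReal)) ^ (2 : ℝ) ∂(volume : Measure ℝ)) ≠ ⊤ := by
      have h2 := lintegral_rpow_enorm_lt_top_of_eLpNorm_lt_top (f := ⇑f)
        (by norm_num : (2 : ENNReal) ≠ 0) (by norm_num : (2 : ENNReal) ≠ ⊤) (Lp.eLpNorm_lt_top f)
      simpa [enorm_eq_nnnorm] using h2.ne
    have hlim : Filter.Tendsto
        (fun n => ∫⁻ t, (S n)ᶜ.indicator (fun t => ((‖f t‖₊ : ENNReal)) ^ (2 : ℝ)) t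
          ∂(volume : Measure ℝ)) Filter.atTop (nhds 0) := by
      have h0 : (0 : ENNReal) = ∫⁻ _, (0 : ENNReal) ∂(volume : Measure ℝ) := by simp
      rw [h0]
      apply tendsto_lintegral_of_dominated_convergence
        (fun t => ((‖f t‖₊ : ENNReal)) ^ (2 : ℝ))
      · exact fun n => hmble.indicator (hSmeas n).compl
      · exact fun n => Filter.Eventually.of_forall fun t => Set.indicator_le_self _ _ t
      · exact hfin
      · apply Filter.Eventually.of_forall
        intro t
        have hev : ∀ n : ℕ, max ⌈‖ψ t‖⌉₊ ⌈|t|⌉₊ ≤ n →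
            (S n)ᶜ.indicator (fun t => ((‖f t‖₊ : ENNReal)) ^ (2 : ℝ)) t = 0 := by
          intro n hn
          have h1 : ‖ψ t‖ ≤ n := le_trans (Nat.le_ceil _)
            (by exact_mod_cast le_trans (le_max_left _ _) hn)
          have h2 : |t| ≤ n := le_trans (Nat.le_ceil _)
            (by exact_mod_cast le_trans (le_max_right _ _) hn)
          have : t ∈ S n := ⟨h1, h2⟩
          rw [Set.indicator_of_notMem (by simpa using this)]
        exact Filter.Tendsto.congr'
          (Filter.eventually_atTop.mpr ⟨_, fun n hn => (hev n hn).symm⟩) tendsto_const_nhds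
    have hform : ∀ n, eLpNorm (Set.indicator (S n)ᶜ ⇑f) 2 (volume : Measure ℝ)
        = (∫⁻ t, (S n)ᶜ.indicator (fun t => ((‖f t‖₊ : ENNReal)) ^ (2 : ℝ)) t
          ∂(volume : Measure ℝ)) ^ (1 / (2:ℝ)) := by
      intro n
      rw [eLpNorm_eq_lintegral_rpow_enorm_toReal (by norm_num) (by norm_num)]
      congr 1
      · apply lintegral_congr
        intro t
        by_cases hts : t ∈ (S n)ᶜ
        · rw [Set.indicator_of_mem hts, Set.indicator_of_mem hts]
          simp [enorm_eq_nnnorm]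
        · rw [Set.indicator_of_notMem hts, Set.indicator_of_notMem hts]
          simp only [nnnorm_zero, ENNReal.coe_zero, enorm_zero]
          rw [ENNReal.zero_rpow_of_pos (by norm_num)]
    simp only [hform]
    have hcont := (ENNReal.continuous_rpow_const (y := (1 / (2:ℝ)))).tendsto 0
    have := hcont.comp hlim
    simpa [ENNReal.zero_rpow_of_pos, Function.comp_def] using this
  exact dense_closure.mp (hD.mono key)

end
end

section
/- Let H be a separable complex Hilbert space, let T₀ be a densely defined closed symmetric operator in H, and let T₁ and T₂ be two distinct self-adjoint extensions of T₀ (T₀ ⊆ T_j = T_j*, j = 1, 2, and T₁ ≠ T₂). Let 𝔈 ⊆ ℝ be a set that is not Lebesgue measurable, and define T̃(t) = T₁ for t ∈ 𝔈 and T̃(t) = T₂ for t ∈ ℝ∖𝔈. Then the family {T̃(t)}_{t∈ℝ} of self-adjoint operators is weakly measurable but not N-measurable. -/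
open MeasureTheory

noncomputable section

variable {H : Type*} [NormedAddCommGroup H] [InnerProductSpace ℂ H]

/-- A self-adjoint `LinearPMap` is its own formal adjoint. -/
lemma formalAdjoint_self_of_isSelfAdjoint [CompleteSpace H] {A : H →ₗ.[ℂ] H}
    (hA : IsSelfAdjoint A) : A.IsFormalAdjoint A := by
  have hd := hA.dense_domain
  have h := LinearPMap.adjoint_isFormalAdjoint hd
  rw [LinearPMap.isSelfAdjoint_def] at hA
  rw [hA] at h
  exact h

/-- If `⟪a,a⟫ + ⟪b,b⟫ = 0` then `a = 0` and `b = 0`. -/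
lemma eq_zero_of_inner_self_add_inner_self {a b : H}
    (h : (inner ℂ a a : ℂ) + inner ℂ b b = 0) : a = 0 ∧ b = 0 := by
  rw [inner_self_eq_norm_sq_to_K, inner_self_eq_norm_sq_to_K] at h
  have h' : (‖a‖ ^ 2 + ‖b‖ ^ 2 : ℝ) = 0 := by
    have h2 : ((‖a‖ ^ 2 + ‖b‖ ^ 2 : ℝ) : ℂ) = 0 := by push_cast; exact h
    exact_mod_cast h2
  have ha : ‖a‖ = 0 := by nlinarith [norm_nonneg a, norm_nonneg b, sq_nonneg ‖a‖, sq_nonneg ‖b‖]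
  have hb : ‖b‖ = 0 := by nlinarith [norm_nonneg a, norm_nonneg b]
  exact ⟨norm_eq_zero.mp ha, norm_eq_zero.mp hb⟩

/-- The characteristic matrix of an operator is unique (pointwise in pairs). -/
lemma charMatrix_pair_unique {T : H →ₗ.[ℂ] H} {P Q : Fin 2 → Fin 2 → (H →L[ℂ] H)}
    (hP : IsCharMatrix T P) (hQ : IsCharMatrix T Q) (x y : H) :
    P 0 0 x + P 0 1 y = Q 0 0 x + Q 0 1 y ∧ P 1 0 x + P 1 1 y = Q 1 0 x + Q 1 1 y := by
  have hmem := T.graph.sub_mem (hP.1 x y) (hQ.1 x y)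
  rw [LinearPMap.mem_graph_iff] at hmem
  obtain ⟨u, hu1, hu2⟩ := hmem
  have e1 := hP.2 x y u
  have e2 := hQ.2 x y u
  have hu1' : ((u : H)) = (P 0 0 x + P 0 1 y) - (Q 0 0 x + Q 0 1 y) := hu1
  have hu2' : T u = (P 1 0 x + P 1 1 y) - (Q 1 0 x + Q 1 1 y) := hu2
  have key : (inner ℂ (u : H) (u : H) : ℂ) + inner ℂ (T u) (T u) = 0 := by
    calc (inner ℂ (u : H) (u : H) : ℂ) + inner ℂ (T u) (T u)
        = (inner ℂ ((P 0 0 x + P 0 1 y) - (Q 0 0 x + Q 0 1 y)) (u : H) : ℂ)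
            + inner ℂ ((P 1 0 x + P 1 1 y) - (Q 1 0 x + Q 1 1 y)) (T u) := by
          rw [← hu1', ← hu2']
      _ = ((inner ℂ (x - (Q 0 0 x + Q 0 1 y)) (u : H) : ℂ)
            + inner ℂ (y - (Q 1 0 x + Q 1 1 y)) (T u))
          - ((inner ℂ (x - (P 0 0 x + P 0 1 y)) (u : H) : ℂ)
            + inner ℂ (y - (P 1 0 x + P 1 1 y)) (T u)) := by
          simp only [inner_sub_left]; ring
      _ = 0 := by rw [e1, e2]; ring
  obtain ⟨h1, h2⟩ := eq_zero_of_inner_self_add_inner_self key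
  constructor
  · have h0 : (P 0 0 x + P 0 1 y) - (Q 0 0 x + Q 0 1 y) = 0 := by rw [← hu1', h1]
    exact sub_eq_zero.mp h0
  · have h0 : (P 1 0 x + P 1 1 y) - (Q 1 0 x + Q 1 1 y) = 0 := by rw [← hu2', h2]
    exact sub_eq_zero.mp h0

/-- The characteristic matrix of an operator is unique, entrywise. -/
lemma charMatrix_unique {T : H →ₗ.[ℂ] H} {P Q : Fin 2 → Fin 2 → (H →L[ℂ] H)}
    (hP : IsCharMatrix T P) (hQ : IsCharMatrix T Q) (j k : Fin 2) (x : H) :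
    P j k x = Q j k x := by
  have hx0 := charMatrix_pair_unique hP hQ x 0
  have h0x := charMatrix_pair_unique hP hQ 0 x
  simp only [map_zero, add_zero, zero_add] at hx0 h0x
  fin_cases j <;> fin_cases k <;> simp [hx0.1, hx0.2, h0x.1, h0x.2]

/-- The characteristic matrix fixes points of the graph. -/
lemma charMatrix_fix {T : H →ₗ.[ℂ] H} {P : Fin 2 → Fin 2 → (H →L[ℂ] H)}
    (hP : IsCharMatrix T P) {x y : H} (hxy : (x, y) ∈ T.graph) :
    P 0 0 x + P 0 1 y = x ∧ P 1 0 x + P 1 1 y = y := by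
  have hmem := T.graph.sub_mem hxy (hP.1 x y)
  rw [LinearPMap.mem_graph_iff] at hmem
  obtain ⟨u, hu1, hu2⟩ := hmem
  have hu1' : ((u : H)) = x - (P 0 0 x + P 0 1 y) := hu1
  have hu2' : T u = y - (P 1 0 x + P 1 1 y) := hu2
  have e1 := hP.2 x y u
  rw [← hu1', ← hu2'] at e1
  obtain ⟨h1, h2⟩ := eq_zero_of_inner_self_add_inner_self e1
  constructor
  · have h0 : x - (P 0 0 x + P 0 1 y) = 0 := by rw [← hu1', h1]
    exact (sub_eq_zero.mp h0).symm
  · have h0 : y - (P 1 0 x + P 1 1 y) = 0 := by rw [← hu2', h2]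
    exact (sub_eq_zero.mp h0).symm

/-- Graph inclusion from coinciding characteristic matrices. -/
lemma graph_le_of_charMatrix_eq {T S : H →ₗ.[ℂ] H} {P Q : Fin 2 → Fin 2 → (H →L[ℂ] H)}
    (hP : IsCharMatrix T P) (hQ : IsCharMatrix S Q)
    (h : ∀ j k : Fin 2, ∀ x : H, P j k x = Q j k x) : T.graph ≤ S.graph := by
  rintro ⟨x, y⟩ hxy
  obtain ⟨h1, h2⟩ := charMatrix_fix hP hxy
  have := hQ.1 x y
  rw [← h 0 0 x, ← h 0 1 y, ← h 1 0 x, ← h 1 1 y, h1, h2] at this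
  exact this

/-- An operator is determined by its characteristic matrix. -/
lemma eq_of_charMatrix_eq {T S : H →ₗ.[ℂ] H} {P Q : Fin 2 → Fin 2 → (H →L[ℂ] H)}
    (hP : IsCharMatrix T P) (hQ : IsCharMatrix S Q)
    (h : ∀ j k : Fin 2, ∀ x : H, P j k x = Q j k x) : T = S := by
  refine LinearPMap.eq_of_eq_graph (le_antisymm (graph_le_of_charMatrix_eq hP hQ h) ?_)
  exact graph_le_of_charMatrix_eq hQ hP (fun j k x => (h j k x).symm)

open scoped Classical in
/-- For two distinct self-adjoint extensions `T₁ ≠ T₂` of a densely defined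
closed symmetric operator `T₀` and a non-Lebesgue-measurable set `𝔈 ⊆ ℝ`, the self-adjoint
family equal to `T₁` on `𝔈` and `T₂` off `𝔈` is weakly measurable but not N-measurable. -/
theorem stmt_16 {H : Type*} [NormedAddCommGroup H] [InnerProductSpace ℂ H]
    [CompleteSpace H] [TopologicalSpace.SeparableSpace H]
    (T₀ T₁ T₂ : H →ₗ.[ℂ] H)
    (hd₀ : Dense (T₀.domain : Set H)) (hc₀ : T₀.IsClosed) (hs₀ : IsSymmPMap T₀)
    (hext₁ : T₀ ≤ T₁) (hsa₁ : IsSelfAdjoint T₁)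
    (hext₂ : T₀ ≤ T₂) (hsa₂ : IsSelfAdjoint T₂)
    (hne : T₁ ≠ T₂)
    (𝔈 : Set ℝ) (h𝔈 : ¬ NullMeasurableSet 𝔈 (volume : Measure ℝ)) :
    WeakMeasFam (fun t => if t ∈ 𝔈 then T₁ else T₂) ∧
      ¬ NMeas (fun t => if t ∈ 𝔈 then T₁ else T₂) := by
  have hle : ∀ t : ℝ, T₀ ≤ (if t ∈ 𝔈 then T₁ else T₂) := by
    intro t
    by_cases ht : t ∈ 𝔈
    · simpa [ht] using hext₁
    · simpa [ht] using hext₂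
  have hfa : ∀ t : ℝ, (if t ∈ 𝔈 then T₁ else T₂).IsFormalAdjoint (if t ∈ 𝔈 then T₁ else T₂) := by
    intro t
    by_cases ht : t ∈ 𝔈
    · simpa [ht] using formalAdjoint_self_of_isSelfAdjoint hsa₁
    · simpa [ht] using formalAdjoint_self_of_isSelfAdjoint hsa₂
  constructor
  · -- Weak measurability
    intro f hf h
    -- key identity for vectors in the domain of `T₀`
    have key : ∀ e : T₀.domain,
        (fun t : ℝ => (inner ℂ (e : H) ((if t ∈ 𝔈 then T₁ else T₂) (f t)) : ℂ))
          = fun t : ℝ => (inner ℂ (T₀ e) ((f t : H)) : ℂ) := by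
      intro e
      funext t
      set T := if t ∈ 𝔈 then T₁ else T₂ with hT
      have he : T₀ e = T ⟨(e : H), (hle t).1 e.2⟩ := (hle t).2 rfl
      calc (inner ℂ (e : H) (T (f t)) : ℂ)
          = inner ℂ (T ⟨(e : H), (hle t).1 e.2⟩) ((f t : H)) :=
            (hfa t ⟨(e : H), (hle t).1 e.2⟩ (f t)).symm
        _ = inner ℂ (T₀ e) ((f t : H)) := by rw [he]
    -- approximate a general `h` by a sequence in `T₀.domain`
    obtain ⟨u, hu, hlim⟩ := mem_closure_iff_seq_limit.1 (hd₀ h)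
    refine aemeasurable_of_tendsto_metrizable_ae Filter.atTop
      (f := fun n t => (inner ℂ (u n) ((if t ∈ 𝔈 then T₁ else T₂) (f t)) : ℂ)) ?_ ?_
    · intro n
      have := key ⟨u n, hu n⟩
      simpa [this] using hf (T₀ ⟨u n, hu n⟩)
    · refine Filter.Eventually.of_forall fun t => ?_
      exact Filter.Tendsto.inner hlim tendsto_const_nhds
  · -- Not N-measurable
    rintro ⟨P, hP, hmeas⟩
    obtain ⟨t₁, ht₁⟩ : ∃ t₁, t₁ ∈ 𝔈 := by
      by_contra hc
      push_neg at hc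
      have : 𝔈 = ∅ := Set.eq_empty_iff_forall_notMem.2 hc
      exact h𝔈 (this ▸ MeasurableSet.empty.nullMeasurableSet)
    obtain ⟨t₂, ht₂⟩ : ∃ t₂, t₂ ∉ 𝔈 := by
      by_contra hc
      push_neg at hc
      have : 𝔈 = Set.univ := Set.eq_univ_of_forall hc
      exact h𝔈 (this ▸ MeasurableSet.univ.nullMeasurableSet)
    have hP₁ : IsCharMatrix T₁ (P t₁) := by simpa [ht₁] using hP t₁
    have hP₂ : IsCharMatrix T₂ (P t₂) := by simpa [ht₂] using hP t₂
    -- the two characteristic matrices must differ somewhere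
    have hdiff : ∃ (j k : Fin 2) (x : H), P t₁ j k x ≠ P t₂ j k x := by
      by_contra hc
      push_neg at hc
      exact hne (eq_of_charMatrix_eq hP₁ hP₂ hc)
    obtain ⟨j, k, x, hx⟩ := hdiff
    obtain ⟨h, hh⟩ : ∃ h : H, (inner ℂ h (P t₁ j k x) : ℂ) ≠ inner ℂ h (P t₂ j k x) := by
      by_contra hc
      push_neg at hc
      exact hx (ext_inner_left ℂ hc)
    set g : ℝ → ℂ := fun t => inner ℂ h (P t j k x) with hg
    have hgval : ∀ t : ℝ, g t = if t ∈ 𝔈 then (inner ℂ h (P t₁ j k x) : ℂ)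
        else (inner ℂ h (P t₂ j k x) : ℂ) := by
      intro t
      by_cases ht : t ∈ 𝔈
      · have hPt : IsCharMatrix T₁ (P t) := by simpa [ht] using hP t
        rw [if_pos ht]
        show (inner ℂ h (P t j k x) : ℂ) = inner ℂ h (P t₁ j k x)
        rw [charMatrix_unique hPt hP₁ j k x]
      · have hPt : IsCharMatrix T₂ (P t) := by simpa [ht] using hP t
        rw [if_neg ht]
        show (inner ℂ h (P t j k x) : ℂ) = inner ℂ h (P t₂ j k x)
        rw [charMatrix_unique hPt hP₂ j k x]
    have hpre : 𝔈 = g ⁻¹' {(inner ℂ h (P t₁ j k x) : ℂ)} := by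
      ext t
      simp only [Set.mem_preimage, Set.mem_singleton_iff, hgval t]
      by_cases ht : t ∈ 𝔈 <;> simp [ht, Ne.symm hh]
    have hgm : AEMeasurable g volume := hmeas j k h x
    exact h𝔈 (hpre ▸ hgm.nullMeasurable (measurableSet_singleton _))

end
end
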